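/- arXiv:2401.18063 — 5 statements merged into one kernel-verified Lean document; each statement's English description precedes it below -/
import Mathlib

section
/- Let A be an invertible n×n real matrix, β a 1×n real row vector, and τ ≥ 0. Then ∫₀^τ t²·(−β·exp(tA)·A·1) dt = −τ²·β·exp(τA)·1 + 2τ·β·exp(τA)·A⁻¹·1 − 2·β·exp(τA)·A⁻²·1 + 2·β·A⁻²·1. (This is the numerator of the conditional second moment E[T² | T < τ]·P[T < τ] of a phase-type random variable T ~ PH(A, β).) -/
open Matrix intervalIntegral

attribute [local instance] Matrix.linftyOpNormedAddCommGroup Matrix.linftyOpNormedRing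
  Matrix.linftyOpNormedAlgebra

private noncomputable def phL {n : ℕ} (β v : Fin n → ℝ) :
    Matrix (Fin n) (Fin n) ℝ →ₗ[ℝ] ℝ where
  toFun M := β ⬝ᵥ (M *ᵥ v)
  map_add' M N := by simp [Matrix.add_mulVec, dotProduct_add]
  map_smul' c M := by simp [Matrix.smul_mulVec, dotProduct_smul]

private lemma phL_hasDerivAt {n : ℕ} (A : Matrix (Fin n) (Fin n) ℝ) (β v : Fin n → ℝ)
    (t : ℝ) :
    HasDerivAt (fun s => β ⬝ᵥ (NormedSpace.exp (s • A) *ᵥ v))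
      (β ⬝ᵥ ((NormedSpace.exp (t • A) * A) *ᵥ v)) t := by
  have h := hasDerivAt_exp_smul_const (𝕂 := ℝ) A t
  have := ((phL β v).toContinuousLinearMap.hasFDerivAt).comp_hasDerivAt t h
  exact this

private lemma phL_continuous {n : ℕ} (A : Matrix (Fin n) (Fin n) ℝ) (β v : Fin n → ℝ) :
    Continuous (fun s : ℝ => β ⬝ᵥ (NormedSpace.exp (s • A) *ᵥ v)) := by
  have h1 : Continuous fun s : ℝ => NormedSpace.exp (s • A) :=
    NormedSpace.exp_continuous.comp (by continuity)
  exact ((phL β v).toContinuousLinearMap.continuous).comp h1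

/-- For an invertible `n × n` real matrix `A`, a row vector `β` and `τ ≥ 0`,
`∫₀^τ t² ⬝ (-β ⬝ exp (t • A) ⬝ A ⬝ 𝟙) dt
  = -τ² ⬝ β ⬝ exp (τ • A) ⬝ 𝟙 + 2τ ⬝ β ⬝ exp (τ • A) ⬝ A⁻¹ ⬝ 𝟙
    - 2 ⬝ β ⬝ exp (τ • A) ⬝ A⁻² ⬝ 𝟙 + 2 ⬝ β ⬝ A⁻² ⬝ 𝟙`,
the numerator of the conditional second moment `E[T² | T < τ] ⬝ P[T < τ]` of `T ~ PH(A, β)`. -/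
theorem phaseType_conditional_second_moment {n : ℕ} (A : Matrix (Fin n) (Fin n) ℝ)
    (hA : IsUnit A.det) (β : Fin n → ℝ) (τ : ℝ) (hτ : 0 ≤ τ) :
    ∫ t in (0:ℝ)..τ, t ^ 2 * (-(β ⬝ᵥ (NormedSpace.exp (t • A) *ᵥ (A *ᵥ (1 : Fin n → ℝ)))))
      = -(τ ^ 2 * (β ⬝ᵥ (NormedSpace.exp (τ • A) *ᵥ (1 : Fin n → ℝ))))
        + 2 * τ * (β ⬝ᵥ (NormedSpace.exp (τ • A) *ᵥ (A⁻¹ *ᵥ (1 : Fin n → ℝ))))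
        - 2 * (β ⬝ᵥ (NormedSpace.exp (τ • A) *ᵥ ((A⁻¹ * A⁻¹) *ᵥ (1 : Fin n → ℝ))))
        + 2 * (β ⬝ᵥ ((A⁻¹ * A⁻¹) *ᵥ (1 : Fin n → ℝ))) := by
  set one : Fin n → ℝ := (1 : Fin n → ℝ)
  set F : ℝ → ℝ := fun t =>
    -(t ^ 2 * (β ⬝ᵥ (NormedSpace.exp (t • A) *ᵥ one)))
      + 2 * t * (β ⬝ᵥ (NormedSpace.exp (t • A) *ᵥ (A⁻¹ *ᵥ one)))
      - 2 * (β ⬝ᵥ (NormedSpace.exp (t • A) *ᵥ ((A⁻¹ * A⁻¹) *ᵥ one))) with hF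
  have hAA : A * A⁻¹ = 1 := Matrix.mul_nonsing_inv A hA
  have hderiv : ∀ t ∈ Set.uIcc (0:ℝ) τ, HasDerivAt F
      (t ^ 2 * (-(β ⬝ᵥ (NormedSpace.exp (t • A) *ᵥ (A *ᵥ one))))) t := by
    intro t _
    have h1 := phL_hasDerivAt A β one t
    have h2 := phL_hasDerivAt A β (A⁻¹ *ᵥ one) t
    have h3 := phL_hasDerivAt A β ((A⁻¹ * A⁻¹) *ᵥ one) t
    have ht2 : HasDerivAt (fun s : ℝ => s ^ 2) (2 * t) t := by
      simpa using (hasDerivAt_pow 2 t)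
    have hts : HasDerivAt (fun s : ℝ => 2 * s) 2 t := by
      simpa using (hasDerivAt_id t).const_mul (2:ℝ)
    have hd : HasDerivAt F
        (-((2 * t) * (β ⬝ᵥ (NormedSpace.exp (t • A) *ᵥ one))
            + t ^ 2 * (β ⬝ᵥ ((NormedSpace.exp (t • A) * A) *ᵥ one)))
          + (2 * (β ⬝ᵥ (NormedSpace.exp (t • A) *ᵥ (A⁻¹ *ᵥ one)))
            + 2 * t * (β ⬝ᵥ ((NormedSpace.exp (t • A) * A) *ᵥ (A⁻¹ *ᵥ one))))
          - 2 * (β ⬝ᵥ ((NormedSpace.exp (t • A) * A) *ᵥ ((A⁻¹ * A⁻¹) *ᵥ one)))) t := by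
      exact (((ht2.mul h1).neg.add (hts.mul h2)).sub (h3.const_mul 2))
    convert hd using 1
    have e1 : (NormedSpace.exp (t • A) * A) *ᵥ (A⁻¹ *ᵥ one)
        = NormedSpace.exp (t • A) *ᵥ one := by
      rw [Matrix.mulVec_mulVec, Matrix.mul_assoc, hAA, Matrix.mul_one]
    have e2 : (NormedSpace.exp (t • A) * A) *ᵥ ((A⁻¹ * A⁻¹) *ᵥ one)
        = NormedSpace.exp (t • A) *ᵥ (A⁻¹ *ᵥ one) := by
      rw [Matrix.mulVec_mulVec, Matrix.mulVec_mulVec, Matrix.mul_assoc,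
        ← Matrix.mul_assoc A, hAA, Matrix.one_mul]
    have e3 : (NormedSpace.exp (t • A) * A) *ᵥ one
        = NormedSpace.exp (t • A) *ᵥ (A *ᵥ one) := by
      rw [Matrix.mulVec_mulVec]
    rw [e1, e2, e3]
    ring
  have hint : IntervalIntegrable
      (fun t => t ^ 2 * (-(β ⬝ᵥ (NormedSpace.exp (t • A) *ᵥ (A *ᵥ one))))) MeasureTheory.volume 0 τ := by
    exact (Continuous.intervalIntegrable (by
      exact (continuous_pow 2).mul (phL_continuous A β (A *ᵥ one)).neg) 0 τ)
  have := intervalIntegral.integral_eq_sub_of_hasDerivAt hderiv hint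
  rw [this]
  have hF0 : F 0 = -2 * (β ⬝ᵥ ((A⁻¹ * A⁻¹) *ᵥ one)) := by
    simp [hF, Matrix.one_mulVec]
  rw [hF0]
  simp [hF]
end

section
/- Let A be an n×n real matrix for which there exist constants C ≥ 0 and c > 0 with ‖exp(tA)‖ ≤ C·exp(−ct) for all t ≥ 0, and let β be a 1×n real row vector. Then ∫₀^∞ t·(−β·exp(tA)·A·1) dt = −β·A⁻¹·1; that is, the first moment of a phase-type random variable T ~ PH(A, β) equals E[T] = −β·A⁻¹·1. -/
open Matrix MeasureTheory

attribute [local instance] Matrix.linftyOpNormedRing Matrix.linftyOpNormedSpace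
attribute [local instance] Matrix.linftyOpNormedAlgebra

set_option maxHeartbeats 2000000 in
open Filter Topology Real Nat in
/-- If `‖exp (t • A)‖ ≤ C ⬝ exp (-c t)` for all `t ≥ 0` with `C ≥ 0`, `c > 0`,
and `β` is a row vector, then `∫₀^∞ t ⬝ (-β ⬝ exp (t • A) ⬝ A ⬝ 𝟙) dt = -β ⬝ A⁻¹ ⬝ 𝟙`:
the first moment of `T ~ PH(A, β)` is `E[T] = -β ⬝ A⁻¹ ⬝ 𝟙`. -/
theorem phaseType_first_moment {n : ℕ} (A : Matrix (Fin n) (Fin n) ℝ)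
    (C c : ℝ) (hC : 0 ≤ C) (hc : 0 < c)
    (hdecay : ∀ t : ℝ, 0 ≤ t → ‖NormedSpace.exp (t • A)‖ ≤ C * Real.exp (-c * t))
    (β : Fin n → ℝ) :
    ∫ t in Set.Ioi (0:ℝ),
        t * (-(β ⬝ᵥ (NormedSpace.exp (t • A) *ᵥ (A *ᵥ (1 : Fin n → ℝ)))))
      = -(β ⬝ᵥ (A⁻¹ *ᵥ (1 : Fin n → ℝ))) := by
  have hexp_cont : Continuous fun t : ℝ => NormedSpace.exp (t • A) :=
    NormedSpace.exp_continuous.comp (continuous_id.smul continuous_const)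
  -- `A` is invertible
  have hA_inv : IsUnit A.det := by
    by_contra hdet
    rw [isUnit_iff_ne_zero, not_ne_iff] at hdet
    obtain ⟨v, hv0, hAv⟩ := Matrix.exists_mulVec_eq_zero_iff.2 hdet
    have hfix : ∀ t : ℝ, NormedSpace.exp (t • A) *ᵥ v = v := by
      intro t
      have hXv : (t • A) *ᵥ v = 0 := by
        rw [Matrix.smul_mulVec, hAv, smul_zero]
      set X := t • A with hX
      let L : Matrix (Fin n) (Fin n) ℝ →ₗ[ℝ] (Fin n → ℝ) :=
        { toFun := fun M => M *ᵥ v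
          map_add' := fun M N => Matrix.add_mulVec M N v
          map_smul' := fun a M => Matrix.smul_mulVec a M v }
      let Lc := LinearMap.toContinuousLinearMap L
      have hLc : NormedSpace.exp X *ᵥ v = Lc (NormedSpace.exp X) := rfl
      rw [hLc, NormedSpace.exp_eq_tsum ℝ, Lc.map_tsum (NormedSpace.expSeries_summable' (𝕂 := ℝ) X)]
      have hterm : ∀ k : ℕ, Lc ((k !⁻¹ : ℝ) • X ^ k) = if k = 0 then v else 0 := by
        intro k
        cases k with
        | zero => simp [Lc, L]
        | succ m =>
          have hpow : X ^ (m + 1) *ᵥ v = 0 := by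
            rw [pow_succ, ← Matrix.mulVec_mulVec, hXv, Matrix.mulVec_zero]
          simp [Lc, L, Matrix.smul_mulVec, hpow]
      calc (∑' k : ℕ, Lc ((k !⁻¹ : ℝ) • X ^ k))
          = ∑' k : ℕ, (if k = 0 then v else 0) := tsum_congr hterm
        _ = v := by rw [tsum_eq_single 0 (fun b hb => by simp [hb])]; simp
    have hvpos : 0 < ‖v‖ := norm_pos_iff.2 hv0
    have htend : Tendsto (fun t : ℝ => C * Real.exp (-c * t)) atTop (𝓝 0) := by
      have h1 : Tendsto (fun t : ℝ => Real.exp (-c * t)) atTop (𝓝 0) :=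
        Real.tendsto_exp_atBot.comp
          ((tendsto_neg_atTop_atBot.comp (tendsto_id.const_mul_atTop hc)).congr
            (fun t => (neg_mul c t).symm))
      simpa using h1.const_mul C
    have hev : ∀ᶠ t : ℝ in atTop, C * Real.exp (-c * t) < 1 ∧ 0 ≤ t :=
      (htend.eventually (eventually_lt_nhds one_pos)).and (eventually_ge_atTop 0)
    obtain ⟨t, ht1, ht0⟩ := hev.exists
    have hle : ‖v‖ ≤ C * Real.exp (-c * t) * ‖v‖ := by
      calc ‖v‖ = ‖NormedSpace.exp (t • A) *ᵥ v‖ := by rw [hfix t]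
        _ ≤ ‖NormedSpace.exp (t • A)‖ * ‖v‖ := Matrix.linfty_opNorm_mulVec _ _
        _ ≤ C * Real.exp (-c * t) * ‖v‖ :=
            mul_le_mul_of_nonneg_right (hdecay t ht0) (norm_nonneg v)
    nlinarith
  have h1 : A⁻¹ * A = 1 := Matrix.nonsing_inv_mul A hA_inv
  -- the fundamental matrix integral: ∫₀^∞ t • exp (t•A) = A⁻¹ * A⁻¹
  set E : ℝ → Matrix (Fin n) (Fin n) ℝ := fun t => NormedSpace.exp (t • A) with hE
  set F : ℝ → Matrix (Fin n) (Fin n) ℝ :=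
    fun t => (t • A⁻¹ - A⁻¹ * A⁻¹) * E t with hF
  have hderiv : ∀ t : ℝ, HasDerivAt F (t • E t) t := by
    intro t
    have hd1 : HasDerivAt (fun s : ℝ => s • A⁻¹ - A⁻¹ * A⁻¹) A⁻¹ t := by
      have h := ((hasDerivAt_id' t).smul_const A⁻¹).sub_const (A⁻¹ * A⁻¹)
      rw [one_smul] at h
      exact h
    have hd2 : HasDerivAt E (A * E t) t := hasDerivAt_exp_smul_const' A t
    have := hd1.mul hd2
    have hkey : A⁻¹ * E t + (t • A⁻¹ - A⁻¹ * A⁻¹) * (A * E t) = t • E t := by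
      rw [sub_mul, Matrix.smul_mul, Matrix.mul_assoc A⁻¹ A⁻¹ (A * E t),
        ← Matrix.mul_assoc A⁻¹ A (E t), h1, Matrix.one_mul]
      abel
    rw [← hkey]
    exact this
  have hcont_f' : Continuous fun t : ℝ => t • E t := continuous_id.smul hexp_cont
  have hint : @IntegrableOn ℝ _ _ PseudoMetricSpace.toUniformSpace.toTopologicalSpace _
      (fun t : ℝ => t • E t) (Set.Ioi (0:ℝ)) volume := by
    have hg : IntegrableOn
        (fun t : ℝ => C * (t ^ (1:ℝ) * Real.exp (-c * t ^ (1:ℝ)))) (Set.Ioi (0:ℝ)) :=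
      (integrableOn_rpow_mul_exp_neg_mul_rpow (by norm_num) one_pos hc).const_mul C
    refine Integrable.mono' hg (@Continuous.aestronglyMeasurable _ _
      PseudoMetricSpace.toUniformSpace.toTopologicalSpace _ _ _ _ _ _ _ hcont_f') ?_
    filter_upwards [ae_restrict_mem measurableSet_Ioi] with t ht
    have ht0 : (0:ℝ) ≤ t := le_of_lt ht
    rw [Real.rpow_one]
    calc ‖t • E t‖ = |t| * ‖E t‖ := by rw [norm_smul]; rfl
      _ = t * ‖E t‖ := by rw [abs_of_nonneg ht0]
      _ ≤ t * (C * Real.exp (-c * t)) :=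
          mul_le_mul_of_nonneg_left (hdecay t ht0) ht0
      _ = C * (t * Real.exp (-c * t)) := by ring
  have htendF : Tendsto F atTop (𝓝 0) := by
    have hb : ∀ᶠ t : ℝ in atTop,
        ‖F t‖ ≤ (t * ‖A⁻¹‖ + ‖A⁻¹ * A⁻¹‖) * (C * Real.exp (-c * t)) := by
      filter_upwards [eventually_ge_atTop (0:ℝ)] with t ht0
      calc ‖F t‖ ≤ ‖t • A⁻¹ - A⁻¹ * A⁻¹‖ * ‖E t‖ := norm_mul_le _ _
        _ ≤ (‖t • A⁻¹‖ + ‖A⁻¹ * A⁻¹‖) * ‖E t‖ :=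
            mul_le_mul_of_nonneg_right (norm_sub_le _ _) (norm_nonneg _)
        _ = (t * ‖A⁻¹‖ + ‖A⁻¹ * A⁻¹‖) * ‖E t‖ := by
            rw [norm_smul, Real.norm_eq_abs, abs_of_nonneg ht0]
        _ ≤ (t * ‖A⁻¹‖ + ‖A⁻¹ * A⁻¹‖) * (C * Real.exp (-c * t)) := by
            refine mul_le_mul_of_nonneg_left (hdecay t ht0) ?_
            positivity
    have hlim : Tendsto
        (fun t : ℝ => (t * ‖A⁻¹‖ + ‖A⁻¹ * A⁻¹‖) * (C * Real.exp (-c * t)))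
        atTop (𝓝 0) := by
      have hte : Tendsto (fun t : ℝ => t * Real.exp (-c * t)) atTop (𝓝 0) := by
        have hct : Tendsto (fun t : ℝ => c * t) atTop atTop :=
          tendsto_id.const_mul_atTop hc
        have h2 : Tendsto (fun t : ℝ => (c * t) ^ 1 * Real.exp (-(c * t))) atTop (𝓝 0) :=
          (Real.tendsto_pow_mul_exp_neg_atTop_nhds_zero 1).comp hct
        have : Tendsto (fun t : ℝ => c⁻¹ * ((c * t) ^ 1 * Real.exp (-(c * t))))
            atTop (𝓝 (c⁻¹ * 0)) := h2.const_mul c⁻¹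
        refine Tendsto.congr' ?_ (by simpa using this)
        filter_upwards with t
        field_simp
      have hexp0 : Tendsto (fun t : ℝ => Real.exp (-c * t)) atTop (𝓝 0) :=
        Real.tendsto_exp_atBot.comp
          ((tendsto_neg_atTop_atBot.comp (tendsto_id.const_mul_atTop hc)).congr
            (fun t => (neg_mul c t).symm))
      have := ((hte.const_mul (‖A⁻¹‖ * C)).add
        (hexp0.const_mul (‖A⁻¹ * A⁻¹‖ * C)))
      rw [mul_zero, mul_zero, add_zero] at this
      refine this.congr fun t => ?_
      ring
    exact squeeze_zero_norm' hb hlim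
  have hF0 : F 0 = -(A⁻¹ * A⁻¹) := by
    simp [hF, hE]
  have hmat : ∫ t in Set.Ioi (0:ℝ), t • E t = A⁻¹ * A⁻¹ := by
    rw [integral_Ioi_of_hasDerivAt_of_tendsto' (fun t _ => hderiv t) hint htendF, hF0]
    simp
  -- reduce the scalar integral to the matrix integral
  set w : Fin n → ℝ := A *ᵥ (1 : Fin n → ℝ) with hw
  let L : Matrix (Fin n) (Fin n) ℝ →ₗ[ℝ] ℝ :=
    { toFun := fun M => β ⬝ᵥ (M *ᵥ w)
      map_add' := fun M N => by
        simp only [Matrix.add_mulVec, dotProduct_add]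
      map_smul' := fun a M => by
        simp only [Matrix.smul_mulVec, dotProduct_smul, smul_eq_mul,
          RingHom.id_apply] }
  let Lc := LinearMap.toContinuousLinearMap L
  have hptwise : ∀ t : ℝ,
      t * (-(β ⬝ᵥ (NormedSpace.exp (t • A) *ᵥ w))) = -Lc (t • E t) := by
    intro t
    have : Lc (t • E t) = t * (β ⬝ᵥ (E t *ᵥ w)) := by
      show β ⬝ᵥ ((t • E t) *ᵥ w) = _
      rw [Matrix.smul_mulVec, dotProduct_smul]
      rfl
    rw [this, hE]
    ring
  calc ∫ t in Set.Ioi (0:ℝ),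
        t * (-(β ⬝ᵥ (NormedSpace.exp (t • A) *ᵥ (A *ᵥ (1 : Fin n → ℝ)))))
      = ∫ t in Set.Ioi (0:ℝ), -Lc (t • E t) := by
        refine integral_congr_ae ?_
        filter_upwards with t using hptwise t
    _ = -Lc (∫ t in Set.Ioi (0:ℝ), t • E t) := by
        rw [integral_neg]
        exact congrArg _ (Lc.integral_comp_comm hint)
    _ = -(β ⬝ᵥ (A⁻¹ *ᵥ (1 : Fin n → ℝ))) := by
        rw [hmat]
        show -(β ⬝ᵥ ((A⁻¹ * A⁻¹) *ᵥ w)) = _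
        rw [hw, Matrix.mulVec_mulVec, Matrix.mul_assoc, h1, Matrix.mul_one]
end

section
/- Let A be an n×n real matrix for which there exist constants C ≥ 0 and c > 0 with ‖exp(tA)‖ ≤ C·exp(−ct) for all t ≥ 0, and let β be a 1×n real row vector. Then ∫₀^∞ t²·(−β·exp(tA)·A·1) dt = 2·β·A⁻²·1; that is, the second moment of a phase-type random variable T ~ PH(A, β) equals E[T²] = 2·β·A⁻²·1. -/
open Matrix MeasureTheory

attribute [local instance] Matrix.linftyOpNormedRing Matrix.linftyOpNormedSpace

section PhaseTypeAux

attribute [local instance] Matrix.linftyOpNormedAlgebra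

@[reducible]
private noncomputable def phTopo {n : ℕ} : TopologicalSpace (Matrix (Fin n) (Fin n) ℝ) :=
  PseudoMetricSpace.toUniformSpace.toTopologicalSpace

attribute [local instance] phTopo

open Filter Set

variable {n : ℕ}

private lemma ph_key_bound (c : ℝ) (hc : 0 < c) (k : ℕ) (t : ℝ) (ht : 0 ≤ t) :
    t ^ k * Real.exp (-c * t) ≤
      ((k.factorial : ℝ) * (2 / c) ^ k) * Real.exp (-(c / 2) * t) := by
  have h1 : ((c / 2) * t) ^ k / (k.factorial : ℝ) ≤ Real.exp ((c / 2) * t) :=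
    Real.pow_div_factorial_le_exp _ (by positivity) k
  have hfac : (0 : ℝ) < (k.factorial : ℝ) := by positivity
  have h2 : t ^ k ≤ (k.factorial : ℝ) * (2 / c) ^ k * Real.exp ((c / 2) * t) := by
    have h3 : ((c / 2) * t) ^ k ≤ (k.factorial : ℝ) * Real.exp ((c / 2) * t) := by
      rw [div_le_iff₀ hfac] at h1
      linarith [h1]
    have h4 : ((c / 2) * t) ^ k = (c / 2) ^ k * t ^ k := mul_pow _ _ _
    have h5 : (2 / c) ^ k * (c / 2) ^ k = 1 := by
      rw [← mul_pow]
      field_simp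
      exact one_pow k
    calc t ^ k = (2 / c) ^ k * ((c / 2) ^ k * t ^ k) := by
          rw [← mul_assoc, h5, one_mul]
      _ = (2 / c) ^ k * ((c / 2) * t) ^ k := by rw [h4]
      _ ≤ (2 / c) ^ k * ((k.factorial : ℝ) * Real.exp ((c / 2) * t)) := by
          apply mul_le_mul_of_nonneg_left h3 (by positivity)
      _ = (k.factorial : ℝ) * (2 / c) ^ k * Real.exp ((c / 2) * t) := by ring
  have hexp : Real.exp ((c / 2) * t) * Real.exp (-c * t) = Real.exp (-(c / 2) * t) := by
    rw [← Real.exp_add]; ring_nf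
  calc t ^ k * Real.exp (-c * t)
      ≤ ((k.factorial : ℝ) * (2 / c) ^ k * Real.exp ((c / 2) * t)) * Real.exp (-c * t) := by
        apply mul_le_mul_of_nonneg_right h2 (Real.exp_pos _).le
    _ = ((k.factorial : ℝ) * (2 / c) ^ k) * (Real.exp ((c / 2) * t) * Real.exp (-c * t)) := by
        ring
    _ = ((k.factorial : ℝ) * (2 / c) ^ k) * Real.exp (-(c / 2) * t) := by rw [hexp]

private lemma ph_cont (A B : Matrix (Fin n) (Fin n) ℝ) (k : ℕ) :
    Continuous fun t : ℝ => t ^ k • (NormedSpace.exp (t • A) * B) := by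
  have h1 : Continuous fun t : ℝ => NormedSpace.exp (t • A) :=
    NormedSpace.exp_continuous.comp (continuous_id.smul continuous_const)
  exact (continuous_pow k).smul (h1.mul continuous_const)

private lemma ph_norm_bound (A B : Matrix (Fin n) (Fin n) ℝ) {C c : ℝ} (hc : 0 < c)
    (hdecay : ∀ t : ℝ, 0 ≤ t → ‖NormedSpace.exp (t • A)‖ ≤ C * Real.exp (-c * t))
    (k : ℕ) (t : ℝ) (ht : 0 ≤ t) :
    ‖t ^ k • (NormedSpace.exp (t • A) * B)‖ ≤
      (C * ‖B‖) * (t ^ k * Real.exp (-c * t)) := by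
  have h1 : ‖t ^ k • (NormedSpace.exp (t • A) * B)‖
      = |t ^ k| * ‖NormedSpace.exp (t • A) * B‖ := norm_smul _ _
  have h2 : ‖NormedSpace.exp (t • A) * B‖ ≤ ‖NormedSpace.exp (t • A)‖ * ‖B‖ :=
    norm_mul_le _ _
  have h3 : ‖NormedSpace.exp (t • A)‖ * ‖B‖ ≤ (C * Real.exp (-c * t)) * ‖B‖ :=
    mul_le_mul_of_nonneg_right (hdecay t ht) (norm_nonneg _)
  have habs : |t ^ k| = t ^ k := abs_of_nonneg (by positivity)
  rw [h1, habs]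
  calc t ^ k * ‖NormedSpace.exp (t • A) * B‖
      ≤ t ^ k * ((C * Real.exp (-c * t)) * ‖B‖) := by
        apply mul_le_mul_of_nonneg_left (h2.trans h3) (by positivity)
    _ = (C * ‖B‖) * (t ^ k * Real.exp (-c * t)) := by ring

private lemma ph_integrable (A B : Matrix (Fin n) (Fin n) ℝ) {C c : ℝ} (hc : 0 < c)
    (hdecay : ∀ t : ℝ, 0 ≤ t → ‖NormedSpace.exp (t • A)‖ ≤ C * Real.exp (-c * t))
    (k : ℕ) :
    IntegrableOn (fun t : ℝ => t ^ k • (NormedSpace.exp (t • A) * B)) (Ioi 0) := by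
  have hg : IntegrableOn
      (fun t : ℝ => ((C * ‖B‖) * ((k.factorial : ℝ) * (2 / c) ^ k)) *
        Real.exp (-(c / 2) * t)) (Ioi 0) :=
    (exp_neg_integrableOn_Ioi 0 (by positivity : (0:ℝ) < c / 2)).const_mul _
  refine hg.mono' ((ph_cont A B k).aestronglyMeasurable.restrict) ?_
  rw [ae_restrict_iff' measurableSet_Ioi]
  filter_upwards with t ht
  have ht' : (0:ℝ) ≤ t := le_of_lt ht
  calc ‖t ^ k • (NormedSpace.exp (t • A) * B)‖
      ≤ (C * ‖B‖) * (t ^ k * Real.exp (-c * t)) := ph_norm_bound A B hc hdecay k t ht'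
    _ ≤ (C * ‖B‖) * (((k.factorial : ℝ) * (2 / c) ^ k) * Real.exp (-(c / 2) * t)) := by
        apply mul_le_mul_of_nonneg_left (ph_key_bound c hc k t ht')
        have h0 : (0:ℝ) ≤ C := by
          have := (norm_nonneg (NormedSpace.exp ((0:ℝ) • A))).trans (hdecay 0 le_rfl)
          simpa using this
        positivity
    _ = ((C * ‖B‖) * ((k.factorial : ℝ) * (2 / c) ^ k)) * Real.exp (-(c / 2) * t) := by ring

private lemma ph_tendsto (A B : Matrix (Fin n) (Fin n) ℝ) {C c : ℝ} (hc : 0 < c)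
    (hdecay : ∀ t : ℝ, 0 ≤ t → ‖NormedSpace.exp (t • A)‖ ≤ C * Real.exp (-c * t))
    (k : ℕ) :
    Tendsto (fun t : ℝ => t ^ k • (NormedSpace.exp (t • A) * B)) atTop (nhds 0) := by
  apply squeeze_zero_norm' (a := fun t => (C * ‖B‖) * (t ^ k * Real.exp (-c * t)))
  · filter_upwards [eventually_ge_atTop (0:ℝ)] with t ht
    exact ph_norm_bound A B hc hdecay k t ht
  · have h1 : Tendsto (fun t : ℝ => (c * t) ^ k * Real.exp (-(c * t))) atTop (nhds 0) :=
      (Real.tendsto_pow_mul_exp_neg_atTop_nhds_zero k).comp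
        (Tendsto.const_mul_atTop hc tendsto_id)
    have h2 : Tendsto (fun t : ℝ => ((C * ‖B‖) / c ^ k) *
        ((c * t) ^ k * Real.exp (-(c * t)))) atTop (nhds (((C * ‖B‖) / c ^ k) * 0)) :=
      h1.const_mul _
    rw [mul_zero] at h2
    convert h2 using 2 with t
    rw [mul_pow]
    have hck : (c:ℝ) ^ k ≠ 0 := by positivity
    field_simp

private lemma ph_main (A : Matrix (Fin n) (Fin n) ℝ)
    (C c : ℝ) (hC : 0 ≤ C) (hc : 0 < c)
    (hdecay : ∀ t : ℝ, 0 ≤ t → ‖NormedSpace.exp (t • A)‖ ≤ C * Real.exp (-c * t))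
    (β : Fin n → ℝ) :
    ∫ t in Set.Ioi (0:ℝ),
        t ^ 2 * (-(β ⬝ᵥ (NormedSpace.exp (t • A) *ᵥ (A *ᵥ (1 : Fin n → ℝ)))))
      = 2 * (β ⬝ᵥ ((A⁻¹ * A⁻¹) *ᵥ (1 : Fin n → ℝ))) := by
  have hderiv : ∀ t : ℝ, HasDerivAt (fun u : ℝ => NormedSpace.exp (u • A))
      (NormedSpace.exp (t • A) * A) t := fun t => hasDerivAt_exp_smul_const A t
  have hcont : Continuous fun t : ℝ => NormedSpace.exp (t • A) :=
    NormedSpace.exp_continuous.comp (continuous_id.smul continuous_const)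
  have hexp0 : NormedSpace.exp ((0:ℝ) • A) = 1 := by
    rw [zero_smul]; exact NormedSpace.exp_zero
  -- integrability
  have hint0 : IntegrableOn (fun t : ℝ => NormedSpace.exp (t • A)) (Ioi 0) := by
    simpa using ph_integrable A 1 hc hdecay 0
  have hintA0 : IntegrableOn (fun t : ℝ => NormedSpace.exp (t • A) * A) (Ioi 0) := by
    simpa using ph_integrable A A hc hdecay 0
  have hint1 : IntegrableOn (fun t : ℝ => t • NormedSpace.exp (t • A)) (Ioi 0) := by
    simpa using ph_integrable A 1 hc hdecay 1
  have hintA1 : IntegrableOn (fun t : ℝ => t • (NormedSpace.exp (t • A) * A)) (Ioi 0) := by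
    simpa using ph_integrable A A hc hdecay 1
  have hintA2 : IntegrableOn (fun t : ℝ => t ^ 2 • (NormedSpace.exp (t • A) * A)) (Ioi 0) :=
    ph_integrable A A hc hdecay 2
  have hintc : IntegrableOn (fun t : ℝ => (2 * t) • NormedSpace.exp (t • A)) (Ioi 0) := by
    have h2 : IntegrableOn (fun t : ℝ => (2:ℝ) • (t • NormedSpace.exp (t • A))) (Ioi 0) :=
      hint1.smul (2:ℝ)
    have he : (fun t : ℝ => (2 * t) • NormedSpace.exp (t • A))
        = fun t : ℝ => (2:ℝ) • (t • NormedSpace.exp (t • A)) :=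
      funext fun t => mul_smul 2 t _
    rw [he]; exact h2
  -- limits at infinity
  have htend0 : Tendsto (fun t : ℝ => NormedSpace.exp (t • A)) atTop (nhds 0) := by
    simpa using ph_tendsto A 1 hc hdecay 0
  have htend1 : Tendsto (fun t : ℝ => t • NormedSpace.exp (t • A)) atTop (nhds 0) := by
    simpa using ph_tendsto A 1 hc hdecay 1
  have htend2 : Tendsto (fun t : ℝ => t ^ 2 • NormedSpace.exp (t • A)) atTop (nhds 0) := by
    simpa using ph_tendsto A 1 hc hdecay 2
  -- FTC on [0, ∞)
  have hE1 : ∫ t in Ioi (0:ℝ), NormedSpace.exp (t • A) * A = -1 := by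
    have h := integral_Ioi_of_hasDerivAt_of_tendsto (a := (0:ℝ)) (m := 0)
      hcont.continuousWithinAt (fun x _ => hderiv x) hintA0 htend0
    rw [h, hexp0]; simp
  have hd1 : ∀ t : ℝ, HasDerivAt (fun u : ℝ => u • NormedSpace.exp (u • A))
      (t • (NormedSpace.exp (t • A) * A) + NormedSpace.exp (t • A)) t := by
    intro t
    exact ((hasDerivAt_id t).smul (hderiv t)).congr_deriv (by simp)
  have hcont1 : Continuous fun t : ℝ => t • NormedSpace.exp (t • A) :=
    continuous_id.smul hcont
  have hE2 : ∫ t in Ioi (0:ℝ),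
      (t • (NormedSpace.exp (t • A) * A) + NormedSpace.exp (t • A)) = 0 := by
    have h := integral_Ioi_of_hasDerivAt_of_tendsto (a := (0:ℝ)) (m := 0)
      hcont1.continuousWithinAt (fun x _ => hd1 x) (hintA1.add hint0) htend1
    rw [h]; simp
  have hd2 : ∀ t : ℝ, HasDerivAt (fun u : ℝ => u ^ 2 • NormedSpace.exp (u • A))
      (t ^ 2 • (NormedSpace.exp (t • A) * A) + (2 * t) • NormedSpace.exp (t • A)) t := by
    intro t
    have h := (hasDerivAt_pow 2 t).smul (hderiv t)
    norm_num at h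
    exact h
  have hcont2 : Continuous fun t : ℝ => t ^ 2 • NormedSpace.exp (t • A) :=
    (continuous_pow 2).smul hcont
  have hE3 : ∫ t in Ioi (0:ℝ),
      (t ^ 2 • (NormedSpace.exp (t • A) * A) + (2 * t) • NormedSpace.exp (t • A)) = 0 := by
    have h := integral_Ioi_of_hasDerivAt_of_tendsto (a := (0:ℝ)) (m := 0)
      hcont2.continuousWithinAt (fun x _ => hd2 x) (hintA2.add hintc) htend2
    rw [h]; simp
  -- the three basic integrals
  set K := ∫ t in Ioi (0:ℝ), NormedSpace.exp (t • A) with hK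
  set J := ∫ t in Ioi (0:ℝ), t • NormedSpace.exp (t • A) with hJ
  set I2 := ∫ t in Ioi (0:ℝ), t ^ 2 • (NormedSpace.exp (t • A) * A) with hI2def
  have hsplit2 : (∫ t in Ioi (0:ℝ), t • (NormedSpace.exp (t • A) * A)) + K = 0 := by
    rw [hK, ← integral_add hintA1 hint0]; exact hE2
  have h2J : (∫ t in Ioi (0:ℝ), (2 * t) • NormedSpace.exp (t • A)) = (2:ℝ) • J := by
    rw [hJ, ← integral_smul]
    congr 1; funext t; rw [mul_smul]
  have hsplit3 : I2 + (2:ℝ) • J = 0 := by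
    rw [hI2def, ← h2J, ← integral_add hintA2 hintc]; exact hE3
  -- right multiplication by A as a continuous linear map
  set R : Matrix (Fin n) (Fin n) ℝ →L[ℝ] Matrix (Fin n) (Fin n) ℝ :=
    (ContinuousLinearMap.mul ℝ (Matrix (Fin n) (Fin n) ℝ)).flip A with hRdef
  have hRapp : ∀ M : Matrix (Fin n) (Fin n) ℝ, R M = M * A := fun M => rfl
  have hKA : K * A = -1 := by
    have h := ContinuousLinearMap.integral_comp_comm R hint0
    rw [← hRapp K, ← h, ← hE1]
    congr 1
  have hJA : J * A = -K := by
    have h := ContinuousLinearMap.integral_comp_comm R hint1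
    have h' : (∫ t in Ioi (0:ℝ), t • (NormedSpace.exp (t • A) * A)) = J * A := by
      rw [← hRapp J, ← h]
      congr 1; funext t
      rw [hRapp, smul_mul_assoc]
    rw [h'] at hsplit2
    linear_combination (norm := module) hsplit2
  have hI2 : I2 = -((2:ℝ) • J) := by
    linear_combination (norm := module) hsplit3
  -- invertibility of A
  have hKA' : (-K) * A = 1 := by rw [Matrix.neg_mul, hKA, neg_neg]
  have hone : A * (-K) = 1 := mul_eq_one_comm.mp hKA'
  have hAinv : A⁻¹ = -K := Matrix.inv_eq_right_inv hone
  have hJKK : J = K * K := by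
    calc J = J * 1 := (mul_one J).symm
      _ = J * (A * -K) := by rw [hone]
      _ = (J * A) * -K := by rw [Matrix.mul_assoc]
      _ = (-K) * -K := by rw [hJA]
      _ = K * K := by rw [neg_mul_neg]
  -- the linear functional M ↦ β ⬝ᵥ (M *ᵥ 1)
  set φlin : Matrix (Fin n) (Fin n) ℝ →ₗ[ℝ] ℝ :=
    { toFun := fun M => β ⬝ᵥ (M *ᵥ (1 : Fin n → ℝ))
      map_add' := fun M N => by simp [Matrix.add_mulVec]
      map_smul' := fun r M => by simp [Matrix.smul_mulVec] } with hφlin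
  set φ : Matrix (Fin n) (Fin n) ℝ →L[ℝ] ℝ := LinearMap.toContinuousLinearMap φlin with hφdef
  have hφ : ∀ M : Matrix (Fin n) (Fin n) ℝ, φ M = β ⬝ᵥ (M *ᵥ (1 : Fin n → ℝ)) :=
    fun M => rfl
  have hfin : (∫ t in Ioi (0:ℝ),
      t ^ 2 * (-(β ⬝ᵥ (NormedSpace.exp (t • A) *ᵥ (A *ᵥ (1 : Fin n → ℝ))))))
        = -(φ I2) := by
    have h := ContinuousLinearMap.integral_comp_comm φ hintA2
    rw [hI2def, ← h, ← integral_neg]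
    congr 1; funext t
    rw [hφ, Matrix.smul_mulVec, dotProduct_smul, Matrix.mulVec_mulVec]
    simp [smul_eq_mul]
  rw [hfin, hI2, map_neg, φ.map_smul, neg_neg, smul_eq_mul, hφ, hJKK, hAinv, neg_mul_neg]

end PhaseTypeAux

/-- If `‖exp (t • A)‖ ≤ C ⬝ exp (-c t)` for all `t ≥ 0` with `C ≥ 0`, `c > 0`,
and `β` is a row vector, then `∫₀^∞ t² ⬝ (-β ⬝ exp (t • A) ⬝ A ⬝ 𝟙) dt = 2 ⬝ β ⬝ A⁻² ⬝ 𝟙`: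
the second moment of `T ~ PH(A, β)` is `E[T²] = 2 β A⁻² 𝟙`. -/
theorem phaseType_second_moment {n : ℕ} (A : Matrix (Fin n) (Fin n) ℝ)
    (C c : ℝ) (hC : 0 ≤ C) (hc : 0 < c)
    (hdecay : ∀ t : ℝ, 0 ≤ t → ‖NormedSpace.exp (t • A)‖ ≤ C * Real.exp (-c * t))
    (β : Fin n → ℝ) :
    ∫ t in Set.Ioi (0:ℝ),
        t ^ 2 * (-(β ⬝ᵥ (NormedSpace.exp (t • A) *ᵥ (A *ᵥ (1 : Fin n → ℝ)))))
      = 2 * (β ⬝ᵥ ((A⁻¹ * A⁻¹) *ᵥ (1 : Fin n → ℝ))) := by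
  exact ph_main A C c hC hc hdecay β
end

section
/- Let A₁ be an n×n real matrix for which there exist constants C ≥ 0 and c > 0 with ‖exp(tA₁)‖ ≤ C·exp(−ct) for all t ≥ 0, let μ > 0, set A₂ = A₁ − μI, let β be a 1×n real row vector, and let τ ≥ 0. Then ∫₀^τ t·(−β·exp(tA₁)·A₁·1) dt + τ·β·exp(τA₁)·1 + ∫₀^∞ s·(−β·exp(τA₁)·exp(sA₂)·A₂·1) ds = β·(A₁⁻¹ − A₂⁻¹)·exp(τA₁)·1 − β·A₁⁻¹·1. (This is the paper's closed-form expression for the expected sojourn time d_j(τ) minus the term 1/σ_j.) -/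
open Matrix MeasureTheory

attribute [local instance] Matrix.linftyOpNormedRing Matrix.linftyOpNormedSpace

open Filter Topology Set

attribute [local instance] Matrix.linftyOpNormedAlgebra

namespace CsmdpAux

variable {n : ℕ}

noncomputable instance : CompleteSpace (Matrix (Fin n) (Fin n) ℝ) :=
  FiniteDimensional.complete ℝ _

noncomputable instance : ContinuousENorm (Matrix (Fin n) (Fin n) ℝ) :=
  SeminormedAddGroup.toContinuousENorm

noncomputable instance : ENormedAddCommMonoid (Matrix (Fin n) (Fin n) ℝ) :=
  NormedAddCommGroup.toENormedAddCommMonoid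

instance : TopologicalSpace.PseudoMetrizableSpace (Matrix (Fin n) (Fin n) ℝ) :=
  PseudoEMetricSpace.pseudoMetrizableSpace

lemma cont_exp (A : Matrix (Fin n) (Fin n) ℝ) :
    Continuous fun t : ℝ => NormedSpace.exp (t • A) :=
  NormedSpace.exp_continuous.comp (continuous_id.smul continuous_const)

lemma ftc_exp (A : Matrix (Fin n) (Fin n) ℝ) (b : ℝ) :
    (∫ t in (0:ℝ)..b, NormedSpace.exp (t • A) * A)
      = NormedSpace.exp (b • A) - 1 := by
  have h := intervalIntegral.integral_eq_sub_of_hasDerivAt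
    (f := fun t : ℝ => NormedSpace.exp (t • A))
    (fun t _ => hasDerivAt_exp_smul_const A t)
    (((cont_exp A).mul continuous_const).intervalIntegrable 0 b)
  simp [NormedSpace.exp_zero] at h
  exact h

lemma ftc_exp' (A : Matrix (Fin n) (Fin n) ℝ) (b : ℝ) :
    (∫ t in (0:ℝ)..b, A * NormedSpace.exp (t • A))
      = NormedSpace.exp (b • A) - 1 := by
  have h := intervalIntegral.integral_eq_sub_of_hasDerivAt
    (f := fun t : ℝ => NormedSpace.exp (t • A))
    (fun t _ => hasDerivAt_exp_smul_const' A t)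
    ((continuous_const.mul (cont_exp A)).intervalIntegrable 0 b)
  simp [NormedSpace.exp_zero] at h
  exact h

lemma parts_exp (A : Matrix (Fin n) (Fin n) ℝ) (b : ℝ) :
    (∫ t in (0:ℝ)..b, t • (NormedSpace.exp (t • A) * A))
      = b • NormedSpace.exp (b • A) - ∫ t in (0:ℝ)..b, NormedSpace.exp (t • A) := by
  have h : ∀ t ∈ Set.uIcc (0:ℝ) b,
      HasDerivAt (fun u : ℝ => u • NormedSpace.exp (u • A))
        (NormedSpace.exp (t • A) + t • (NormedSpace.exp (t • A) * A)) t := by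
    intro t _
    exact ((hasDerivAt_id t).smul (hasDerivAt_exp_smul_const A t)).congr_deriv
      (by simp [add_comm]; rfl)
  have hc2 : Continuous fun t : ℝ => t • (NormedSpace.exp (t • A) * A) :=
    continuous_id.smul ((cont_exp A).mul continuous_const)
  have h2 := intervalIntegral.integral_eq_sub_of_hasDerivAt h
    (((cont_exp A).add hc2).intervalIntegrable 0 b)
  rw [intervalIntegral.integral_add ((cont_exp A).intervalIntegrable 0 b)
      (hc2.intervalIntegrable 0 b)] at h2
  simp only [zero_smul, sub_zero] at h2
  exact eq_sub_of_add_eq' h2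

lemma tendsto_mul_exp_neg {C c : ℝ} (hc : 0 < c) :
    Tendsto (fun x : ℝ => x * (C * Real.exp (-c * x))) atTop (𝓝 0) := by
  have h := (Real.tendsto_pow_mul_exp_neg_atTop_nhds_zero 1).comp
    (tendsto_id.const_mul_atTop hc)
  have h2 : Tendsto (fun x : ℝ => (C / c) * ((c * x) ^ 1 * Real.exp (-(c * x))))
      atTop (𝓝 ((C / c) * 0)) := h.const_mul _
  rw [mul_zero] at h2
  refine h2.congr fun x => ?_
  field_simp

lemma tendsto_exp_zero {A : Matrix (Fin n) (Fin n) ℝ} {C c : ℝ} (hc : 0 < c)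
    (hdecay : ∀ t : ℝ, 0 ≤ t → ‖NormedSpace.exp (t • A)‖ ≤ C * Real.exp (-c * t)) :
    Tendsto (fun t : ℝ => NormedSpace.exp (t • A)) atTop (𝓝 0) := by
  have hb : Tendsto (fun t : ℝ => C * Real.exp (-c * t)) atTop (𝓝 0) := by
    have h := Real.tendsto_exp_neg_atTop_nhds_zero.comp (tendsto_id.const_mul_atTop hc)
    have h2 := h.const_mul C
    rw [mul_zero] at h2
    exact h2.congr fun x => by simp [Function.comp, neg_mul]
  exact squeeze_zero_norm' (eventually_atTop.2 ⟨0, fun t ht => hdecay t ht⟩) hb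

lemma integrableOn_exp {A : Matrix (Fin n) (Fin n) ℝ} {C c : ℝ} (hc : 0 < c)
    (hdecay : ∀ t : ℝ, 0 ≤ t → ‖NormedSpace.exp (t • A)‖ ≤ C * Real.exp (-c * t)) :
    IntegrableOn (fun t : ℝ => NormedSpace.exp (t • A)) (Set.Ioi 0) := by
  apply Integrable.mono' ((exp_neg_integrableOn_Ioi 0 hc).const_mul C)
    (cont_exp A).aestronglyMeasurable.restrict
  filter_upwards [ae_restrict_mem measurableSet_Ioi] with t ht
  exact hdecay t ht.le

lemma integrableOn_id_mul_exp {c : ℝ} (hc : 0 < c) :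
    IntegrableOn (fun x : ℝ => x * Real.exp (-c * x)) (Set.Ioi 0) := by
  have h := integrableOn_rpow_mul_exp_neg_mul_rpow
    (by norm_num : (-1:ℝ) < 1) (by norm_num : (0:ℝ) < 1) hc
  simpa [Real.rpow_one] using h

lemma integrableOn_smul_exp {A : Matrix (Fin n) (Fin n) ℝ} {C c : ℝ} (hc : 0 < c)
    (hdecay : ∀ t : ℝ, 0 ≤ t → ‖NormedSpace.exp (t • A)‖ ≤ C * Real.exp (-c * t)) :
    IntegrableOn (fun s : ℝ => s • (NormedSpace.exp (s • A) * A)) (Set.Ioi 0) := by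
  have hb : IntegrableOn (fun x : ℝ => (C * ‖A‖) * (x * Real.exp (-c * x))) (Set.Ioi 0) :=
    (integrableOn_id_mul_exp hc).const_mul _
  apply Integrable.mono' hb
    (continuous_id.smul ((cont_exp A).mul continuous_const)).aestronglyMeasurable.restrict
  filter_upwards [ae_restrict_mem measurableSet_Ioi] with s hs
  have h1 : ‖s • (NormedSpace.exp (s • A) * A)‖ ≤ |s| * (‖NormedSpace.exp (s • A)‖ * ‖A‖) := by
    rw [norm_smul]
    exact mul_le_mul_of_nonneg_left (norm_mul_le _ _) (abs_nonneg s)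
  refine h1.trans ?_
  rw [abs_of_pos hs]
  have h2 : ‖NormedSpace.exp (s • A)‖ * ‖A‖ ≤ (C * Real.exp (-c * s)) * ‖A‖ :=
    mul_le_mul_of_nonneg_right (hdecay s hs.le) (norm_nonneg _)
  calc s * (‖NormedSpace.exp (s • A)‖ * ‖A‖) ≤ s * ((C * Real.exp (-c * s)) * ‖A‖) :=
        mul_le_mul_of_nonneg_left h2 hs.le
    _ = (C * ‖A‖) * (s * Real.exp (-c * s)) := by ring

lemma integral_exp_inv {A : Matrix (Fin n) (Fin n) ℝ} {C c : ℝ} (hc : 0 < c)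
    (hdecay : ∀ t : ℝ, 0 ≤ t → ‖NormedSpace.exp (t • A)‖ ≤ C * Real.exp (-c * t)) :
    A * (∫ t in Set.Ioi (0:ℝ), NormedSpace.exp (t • A)) = -1 ∧
      (∫ t in Set.Ioi (0:ℝ), NormedSpace.exp (t • A)) * A = -1 := by
  have hInt := integrableOn_exp hc hdecay
  have htend := tendsto_exp_zero hc hdecay
  have hlim : Tendsto (fun b : ℝ => NormedSpace.exp (b • A) - 1) atTop (𝓝 (-1)) := by
    simpa using htend.sub tendsto_const_nhds
  constructor
  · set L : Matrix (Fin n) (Fin n) ℝ →L[ℝ] Matrix (Fin n) (Fin n) ℝ :=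
      (LinearMap.mulLeft ℝ A).toContinuousLinearMap with hL
    have hIntL : IntegrableOn (fun t : ℝ => A * NormedSpace.exp (t • A)) (Set.Ioi 0) :=
      L.integrable_comp hInt
    have h1 : Tendsto (fun b : ℝ => ∫ t in (0:ℝ)..b, A * NormedSpace.exp (t • A)) atTop
        (𝓝 (∫ t in Set.Ioi (0:ℝ), A * NormedSpace.exp (t • A))) :=
      intervalIntegral_tendsto_integral_Ioi 0 hIntL tendsto_id
    have h2 : (∫ t in Set.Ioi (0:ℝ), A * NormedSpace.exp (t • A))
        = A * ∫ t in Set.Ioi (0:ℝ), NormedSpace.exp (t • A) := by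
      exact L.integral_comp_comm hInt
    rw [h2] at h1
    have h3 : Tendsto (fun b : ℝ => ∫ t in (0:ℝ)..b, A * NormedSpace.exp (t • A)) atTop
        (𝓝 (-1)) := by
      refine hlim.congr fun b => ?_
      rw [ftc_exp' A b]
    exact tendsto_nhds_unique h1 h3
  · set L : Matrix (Fin n) (Fin n) ℝ →L[ℝ] Matrix (Fin n) (Fin n) ℝ :=
      (LinearMap.mulRight ℝ A).toContinuousLinearMap with hL
    have hIntL : IntegrableOn (fun t : ℝ => NormedSpace.exp (t • A) * A) (Set.Ioi 0) :=
      L.integrable_comp hInt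
    have h1 : Tendsto (fun b : ℝ => ∫ t in (0:ℝ)..b, NormedSpace.exp (t • A) * A) atTop
        (𝓝 (∫ t in Set.Ioi (0:ℝ), NormedSpace.exp (t • A) * A)) :=
      intervalIntegral_tendsto_integral_Ioi 0 hIntL tendsto_id
    have h2 : (∫ t in Set.Ioi (0:ℝ), NormedSpace.exp (t • A) * A)
        = (∫ t in Set.Ioi (0:ℝ), NormedSpace.exp (t • A)) * A := by
      exact L.integral_comp_comm hInt
    rw [h2] at h1
    have h3 : Tendsto (fun b : ℝ => ∫ t in (0:ℝ)..b, NormedSpace.exp (t • A) * A) atTop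
        (𝓝 (-1)) := by
      refine hlim.congr fun b => ?_
      rw [ftc_exp A b]
    exact tendsto_nhds_unique h1 h3

lemma inv_eq_neg_integral {A : Matrix (Fin n) (Fin n) ℝ} {C c : ℝ} (hc : 0 < c)
    (hdecay : ∀ t : ℝ, 0 ≤ t → ‖NormedSpace.exp (t • A)‖ ≤ C * Real.exp (-c * t)) :
    A⁻¹ = -(∫ t in Set.Ioi (0:ℝ), NormedSpace.exp (t • A)) := by
  apply Matrix.inv_eq_right_inv
  rw [mul_neg, (integral_exp_inv hc hdecay).1, neg_neg]

lemma inv_mul_self {A : Matrix (Fin n) (Fin n) ℝ} {C c : ℝ} (hc : 0 < c)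
    (hdecay : ∀ t : ℝ, 0 ≤ t → ‖NormedSpace.exp (t • A)‖ ≤ C * Real.exp (-c * t)) :
    A⁻¹ * A = 1 := by
  rw [inv_eq_neg_integral hc hdecay, neg_mul, (integral_exp_inv hc hdecay).2, neg_neg]

lemma mul_inv_self {A : Matrix (Fin n) (Fin n) ℝ} {C c : ℝ} (hc : 0 < c)
    (hdecay : ∀ t : ℝ, 0 ≤ t → ‖NormedSpace.exp (t • A)‖ ≤ C * Real.exp (-c * t)) :
    A * A⁻¹ = 1 := by
  rw [inv_eq_neg_integral hc hdecay, mul_neg, (integral_exp_inv hc hdecay).1, neg_neg]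

lemma integral_smul_exp_eq_inv {A : Matrix (Fin n) (Fin n) ℝ} {C c : ℝ} (hC : 0 ≤ C) (hc : 0 < c)
    (hdecay : ∀ t : ℝ, 0 ≤ t → ‖NormedSpace.exp (t • A)‖ ≤ C * Real.exp (-c * t)) :
    (∫ s in Set.Ioi (0:ℝ), s • (NormedSpace.exp (s • A) * A)) = A⁻¹ := by
  have hIntK := integrableOn_smul_exp hc hdecay
  have h1 : Tendsto (fun b : ℝ => ∫ s in (0:ℝ)..b, s • (NormedSpace.exp (s • A) * A)) atTop
      (𝓝 (∫ s in Set.Ioi (0:ℝ), s • (NormedSpace.exp (s • A) * A))) :=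
    intervalIntegral_tendsto_integral_Ioi 0 hIntK tendsto_id
  have hsm : Tendsto (fun b : ℝ => b • NormedSpace.exp (b • A)) atTop (𝓝 0) := by
    refine squeeze_zero_norm' ?_ (tendsto_mul_exp_neg (C := C) hc)
    filter_upwards [eventually_ge_atTop (0:ℝ)] with b hb
    rw [norm_smul, Real.norm_eq_abs, abs_of_nonneg hb]
    exact mul_le_mul_of_nonneg_left (hdecay b hb) hb
  have hJ : Tendsto (fun b : ℝ => ∫ t in (0:ℝ)..b, NormedSpace.exp (t • A)) atTop
      (𝓝 (∫ t in Set.Ioi (0:ℝ), NormedSpace.exp (t • A))) :=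
    intervalIntegral_tendsto_integral_Ioi 0 (integrableOn_exp hc hdecay) tendsto_id
  have h2 : Tendsto (fun b : ℝ => ∫ s in (0:ℝ)..b, s • (NormedSpace.exp (s • A) * A)) atTop
      (𝓝 (0 - ∫ t in Set.Ioi (0:ℝ), NormedSpace.exp (t • A))) := by
    refine (hsm.sub hJ).congr fun b => ?_
    rw [parts_exp A b]
  have h3 := tendsto_nhds_unique h1 h2
  rw [h3, zero_sub, ← inv_eq_neg_integral hc hdecay]

lemma commute_inv {A X : Matrix (Fin n) (Fin n) ℝ} (hl : A⁻¹ * A = 1) (hr : A * A⁻¹ = 1)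
    (h : Commute A X) : A⁻¹ * X = X * A⁻¹ := by
  calc A⁻¹ * X = A⁻¹ * X * (A * A⁻¹) := by rw [hr, mul_one]
    _ = A⁻¹ * (X * A) * A⁻¹ := by noncomm_ring
    _ = A⁻¹ * (A * X) * A⁻¹ := by rw [← h.eq]
    _ = (A⁻¹ * A) * (X * A⁻¹) := by noncomm_ring
    _ = X * A⁻¹ := by rw [hl, one_mul]

noncomputable def dotCLM (β v : Fin n → ℝ) : Matrix (Fin n) (Fin n) ℝ →L[ℝ] ℝ :=
  LinearMap.toContinuousLinearMap
    { toFun := fun M => β ⬝ᵥ (M *ᵥ v)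
      map_add' := fun M N => by simp [Matrix.add_mulVec]
      map_smul' := fun r M => by simp [Matrix.smul_mulVec] }

@[simp] lemma dotCLM_apply (β v : Fin n → ℝ) (M : Matrix (Fin n) (Fin n) ℝ) :
    dotCLM β v M = β ⬝ᵥ (M *ᵥ v) := rfl

lemma exp_sub_smul_one (A : Matrix (Fin n) (Fin n) ℝ) (μ s : ℝ) :
    NormedSpace.exp (s • (A - μ • (1 : Matrix (Fin n) (Fin n) ℝ)))
      = Real.exp (-(μ * s)) • NormedSpace.exp (s • A) := by
  have h1 : s • (A - μ • (1 : Matrix (Fin n) (Fin n) ℝ))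
      = (-(μ * s)) • (1 : Matrix (Fin n) (Fin n) ℝ) + s • A := by
    rw [smul_sub, smul_smul, neg_smul, mul_comm s μ, neg_add_eq_sub]
  rw [h1, Matrix.exp_add_of_commute _ _ (((Commute.one_left A).smul_left _).smul_right _)]
  have h2 : NormedSpace.exp ((-(μ * s)) • (1 : Matrix (Fin n) (Fin n) ℝ))
      = Real.exp (-(μ * s)) • (1 : Matrix (Fin n) (Fin n) ℝ) := by
    rw [← Algebra.algebraMap_eq_smul_one, Real.exp_eq_exp_ℝ, ← Algebra.algebraMap_eq_smul_one]
    exact (NormedSpace.algebraMap_exp_comm _).symm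
  rw [h2, smul_mul_assoc, one_mul]

end CsmdpAux


/-- Let `A₁` satisfy `‖exp (t • A₁)‖ ≤ C ⬝ exp (-c t)` for all `t ≥ 0`
(`C ≥ 0`, `c > 0`), let `μ > 0`, set `A₂ = A₁ - μI`, let `β` be a row vector and `τ ≥ 0`.
Then
`∫₀^τ t (-β exp (t A₁) A₁ 𝟙) dt + τ β exp (τ A₁) 𝟙 + ∫₀^∞ s (-β exp (τ A₁) exp (s A₂) A₂ 𝟙) ds
  = β (A₁⁻¹ - A₂⁻¹) exp (τ A₁) 𝟙 - β A₁⁻¹ 𝟙`,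
the closed form of the expected sojourn time `d_j(τ)` minus `1/σ_j`. -/
theorem csmdp_expected_sojourn_time {n : ℕ} (A₁ : Matrix (Fin n) (Fin n) ℝ)
    (C c : ℝ) (hC : 0 ≤ C) (hc : 0 < c)
    (hdecay : ∀ t : ℝ, 0 ≤ t → ‖NormedSpace.exp (t • A₁)‖ ≤ C * Real.exp (-c * t))
    (μ : ℝ) (hμ : 0 < μ)
    (A₂ : Matrix (Fin n) (Fin n) ℝ)
    (hA₂ : A₂ = A₁ - μ • (1 : Matrix (Fin n) (Fin n) ℝ))
    (β : Fin n → ℝ) (τ : ℝ) (hτ : 0 ≤ τ) :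
    (∫ t in (0:ℝ)..τ, t * (-(β ⬝ᵥ (NormedSpace.exp (t • A₁) *ᵥ (A₁ *ᵥ (1 : Fin n → ℝ))))))
      + τ * (β ⬝ᵥ (NormedSpace.exp (τ • A₁) *ᵥ (1 : Fin n → ℝ)))
      + (∫ s in Set.Ioi (0:ℝ),
          s * (-(β ⬝ᵥ ((NormedSpace.exp (τ • A₁) * NormedSpace.exp (s • A₂))
              *ᵥ (A₂ *ᵥ (1 : Fin n → ℝ))))))
      = β ⬝ᵥ (((A₁⁻¹ - A₂⁻¹) * NormedSpace.exp (τ • A₁)) *ᵥ (1 : Fin n → ℝ))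
        - β ⬝ᵥ (A₁⁻¹ *ᵥ (1 : Fin n → ℝ)) := by
  have hcμ : 0 < c + μ := by linarith
  set eτ : Matrix (Fin n) (Fin n) ℝ := NormedSpace.exp (τ • A₁) with heτ
  -- decay for A₂
  have hdecay₂ : ∀ s : ℝ, 0 ≤ s →
      ‖NormedSpace.exp (s • A₂)‖ ≤ C * Real.exp (-(c + μ) * s) := by
    intro s hs
    rw [hA₂, CsmdpAux.exp_sub_smul_one, norm_smul, Real.norm_eq_abs,
      abs_of_pos (Real.exp_pos _)]
    calc Real.exp (-(μ * s)) * ‖NormedSpace.exp (s • A₁)‖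
        ≤ Real.exp (-(μ * s)) * (C * Real.exp (-c * s)) :=
          mul_le_mul_of_nonneg_left (hdecay s hs) (Real.exp_pos _).le
      _ = C * Real.exp (-(c + μ) * s) := by
          rw [show (-(c + μ) * s) = (-(μ * s)) + (-c * s) by ring, Real.exp_add]; ring
  -- inverse identities
  have hA1l := CsmdpAux.inv_mul_self hc hdecay
  have hA1r := CsmdpAux.mul_inv_self hc hdecay
  have hA2l := CsmdpAux.inv_mul_self hcμ hdecay₂
  have hA2r := CsmdpAux.mul_inv_self hcμ hdecay₂
  -- commutation
  have hcomm1 : Commute A₁ eτ := ((Commute.refl A₁).smul_right τ).exp_right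
  have hcomm2 : Commute A₂ eτ := by
    have h : Commute A₂ A₁ := by
      rw [hA₂]
      exact Commute.sub_left (Commute.refl A₁) ((Commute.one_left A₁).smul_left μ)
    exact (h.smul_right τ).exp_right
  have hc1 : A₁⁻¹ * eτ = eτ * A₁⁻¹ := CsmdpAux.commute_inv hA1l hA1r hcomm1
  have hc2 : A₂⁻¹ * eτ = eτ * A₂⁻¹ := CsmdpAux.commute_inv hA2l hA2r hcomm2
  -- the interval integral J₁
  set J₁ : Matrix (Fin n) (Fin n) ℝ := ∫ t in (0:ℝ)..τ, NormedSpace.exp (t • A₁) with hJ₁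
  have hJ : J₁ = A₁⁻¹ * eτ - A₁⁻¹ := by
    have h := CsmdpAux.ftc_exp A₁ τ
    have h2 : (∫ t in (0:ℝ)..τ, NormedSpace.exp (t • A₁) * A₁) = J₁ * A₁ := by
      have hInt : IntervalIntegrable (fun t : ℝ => NormedSpace.exp (t • A₁))
          MeasureTheory.volume 0 τ := (CsmdpAux.cont_exp A₁).intervalIntegrable 0 τ
      have h3 := ((LinearMap.mulRight ℝ A₁).toContinuousLinearMap).intervalIntegral_comp_comm hInt
      exact h3
    rw [h2] at h
    calc J₁ = J₁ * (A₁ * A₁⁻¹) := by rw [hA1r, mul_one]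
      _ = (J₁ * A₁) * A₁⁻¹ := by rw [mul_assoc]
      _ = (eτ - 1) * A₁⁻¹ := by rw [h]
      _ = A₁⁻¹ * eτ - A₁⁻¹ := by rw [sub_mul, one_mul, ← hc1]
  -- term 1
  set L : Matrix (Fin n) (Fin n) ℝ →L[ℝ] ℝ := CsmdpAux.dotCLM β 1 with hL
  have hgi : IntervalIntegrable (fun t : ℝ => t • (NormedSpace.exp (t • A₁) * A₁))
      MeasureTheory.volume 0 τ :=
    (continuous_id.smul ((CsmdpAux.cont_exp A₁).mul continuous_const)).intervalIntegrable 0 τ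
  have hterm1 : (∫ t in (0:ℝ)..τ,
        t * (-(β ⬝ᵥ (NormedSpace.exp (t • A₁) *ᵥ (A₁ *ᵥ (1 : Fin n → ℝ))))))
      = -(τ * (β ⬝ᵥ (eτ *ᵥ (1 : Fin n → ℝ)))) + β ⬝ᵥ (J₁ *ᵥ (1 : Fin n → ℝ)) := by
    have h1 : ∀ t : ℝ,
        t * (-(β ⬝ᵥ (NormedSpace.exp (t • A₁) *ᵥ (A₁ *ᵥ (1 : Fin n → ℝ)))))
          = L (-(t • (NormedSpace.exp (t • A₁) * A₁))) := by
      intro t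
      simp only [hL, CsmdpAux.dotCLM_apply, Matrix.neg_mulVec, Matrix.smul_mulVec,
        Matrix.mulVec_mulVec, dotProduct_neg, dotProduct_smul, smul_eq_mul]
      ring
    calc (∫ t in (0:ℝ)..τ,
            t * (-(β ⬝ᵥ (NormedSpace.exp (t • A₁) *ᵥ (A₁ *ᵥ (1 : Fin n → ℝ))))))
        = ∫ t in (0:ℝ)..τ, L (-(t • (NormedSpace.exp (t • A₁) * A₁))) := by
          simp_rw [h1]
      _ = L (-(∫ t in (0:ℝ)..τ, t • (NormedSpace.exp (t • A₁) * A₁))) := by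
          have hgi' : IntervalIntegrable
              (fun t : ℝ => -(t • (NormedSpace.exp (t • A₁) * A₁)))
              MeasureTheory.volume 0 τ := hgi.neg
          rw [← intervalIntegral.integral_neg]
          exact L.intervalIntegral_comp_comm hgi'
      _ = L (-(τ • eτ - J₁)) := by rw [CsmdpAux.parts_exp A₁ τ]
      _ = -(τ * (β ⬝ᵥ (eτ *ᵥ (1 : Fin n → ℝ)))) + β ⬝ᵥ (J₁ *ᵥ (1 : Fin n → ℝ)) := by
          rw [neg_sub, map_sub, _root_.map_smul, hL]
          simp only [CsmdpAux.dotCLM_apply, smul_eq_mul]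
          ring
  -- term 3
  set L₂ : Matrix (Fin n) (Fin n) ℝ →L[ℝ] ℝ :=
    L.comp (LinearMap.mulLeft ℝ eτ).toContinuousLinearMap with hL₂def
  have hL₂app : ∀ M : Matrix (Fin n) (Fin n) ℝ,
      L₂ M = β ⬝ᵥ ((eτ * M) *ᵥ (1 : Fin n → ℝ)) := fun M => rfl
  have h3int : MeasureTheory.IntegrableOn
      (fun s : ℝ => s • (NormedSpace.exp (s • A₂) * A₂)) (Set.Ioi 0) :=
    CsmdpAux.integrableOn_smul_exp hcμ hdecay₂
  have hK : (∫ s in Set.Ioi (0:ℝ), s • (NormedSpace.exp (s • A₂) * A₂)) = A₂⁻¹ :=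
    CsmdpAux.integral_smul_exp_eq_inv hC hcμ hdecay₂
  have hterm3 : (∫ s in Set.Ioi (0:ℝ),
        s * (-(β ⬝ᵥ ((NormedSpace.exp (τ • A₁) * NormedSpace.exp (s • A₂))
            *ᵥ (A₂ *ᵥ (1 : Fin n → ℝ))))))
      = -(β ⬝ᵥ ((eτ * A₂⁻¹) *ᵥ (1 : Fin n → ℝ))) := by
    have h1 : ∀ s : ℝ,
        s * (-(β ⬝ᵥ ((NormedSpace.exp (τ • A₁) * NormedSpace.exp (s • A₂))
            *ᵥ (A₂ *ᵥ (1 : Fin n → ℝ)))))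
          = L₂ (-(s • (NormedSpace.exp (s • A₂) * A₂))) := by
      intro s
      rw [hL₂app]
      simp only [Matrix.mulVec_mulVec, Matrix.neg_mulVec, Matrix.mul_neg, Matrix.mul_smul,
        Matrix.smul_mulVec, dotProduct_neg, dotProduct_smul, smul_eq_mul,
        mul_assoc]
      ring
    calc (∫ s in Set.Ioi (0:ℝ),
            s * (-(β ⬝ᵥ ((NormedSpace.exp (τ • A₁) * NormedSpace.exp (s • A₂))
                *ᵥ (A₂ *ᵥ (1 : Fin n → ℝ))))))
        = ∫ s in Set.Ioi (0:ℝ), L₂ (-(s • (NormedSpace.exp (s • A₂) * A₂))) := by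
          simp_rw [h1]
      _ = L₂ (-(∫ s in Set.Ioi (0:ℝ), s • (NormedSpace.exp (s • A₂) * A₂))) := by
          have h3int' : MeasureTheory.IntegrableOn
              (fun s : ℝ => -(s • (NormedSpace.exp (s • A₂) * A₂))) (Set.Ioi 0) := h3int.neg
          rw [← MeasureTheory.integral_neg]
          exact L₂.integral_comp_comm h3int'
      _ = -(β ⬝ᵥ ((eτ * A₂⁻¹) *ᵥ (1 : Fin n → ℝ))) := by
          rw [hK, map_neg, hL₂app]
  rw [hterm1, hterm3, hJ, ← hc2]
  simp only [Matrix.sub_mul, Matrix.sub_mulVec, dotProduct_sub]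
  ring
end

section
/- Let A₁ be an n×n real matrix for which there exist constants C ≥ 0 and c > 0 with ‖exp(tA₁)‖ ≤ C·exp(−ct) for all t ≥ 0, let μ > 0, set A₂ = A₁ − μI, let β be a 1×n real row vector, and let τ ≥ 0. Then ∫₀^τ (t²/2)·(−β·exp(tA₁)·A₁·1) dt + ∫₀^∞ ((τ+s)²/2)·(−β·exp(τA₁)·exp(sA₂)·A₂·1) ds = τ·β·exp(τA₁)·(A₁⁻¹ − A₂⁻¹)·1 + β·A₁⁻²·1 + β·exp(τA₁)·(A₂⁻² − A₁⁻²)·1. (This is the paper's closed-form expression for the expected age cost a_j(τ).) -/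
open Matrix MeasureTheory

attribute [local instance] Matrix.linftyOpNormedRing Matrix.linftyOpNormedSpace

attribute [local instance] Matrix.linftyOpNormedAlgebra

namespace CsmdpAux

open NormedSpace Filter Set Topology

variable {n : ℕ}

abbrev NCLM (E F : Type*) [NormedAddCommGroup E] [NormedSpace ℝ E] [NormedAddCommGroup F]
    [NormedSpace ℝ F] : Type _ := E →L[ℝ] F

/-- The continuous linear map `M ↦ β ⬝ᵥ (M *ᵥ 1)`. -/
noncomputable def L (β : Fin n → ℝ) : NCLM (Matrix (Fin n) (Fin n) ℝ) ℝ :=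
  LinearMap.toContinuousLinearMap
    { toFun := fun M => β ⬝ᵥ (M *ᵥ (1 : Fin n → ℝ))
      map_add' := fun M N => by simp [Matrix.add_mulVec, dotProduct_add]
      map_smul' := fun r M => by simp [Matrix.smul_mulVec, dotProduct_smul] }

@[simp] lemma L_apply (β : Fin n → ℝ) (M : Matrix (Fin n) (Fin n) ℝ) :
    L β M = β ⬝ᵥ (M *ᵥ (1 : Fin n → ℝ)) := rfl

noncomputable def mvCLM (v : Fin n → ℝ) : NCLM (Matrix (Fin n) (Fin n) ℝ) (Fin n → ℝ) :=
  LinearMap.toContinuousLinearMap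
    { toFun := fun M => M *ᵥ v
      map_add' := fun M N => by simp [Matrix.add_mulVec]
      map_smul' := fun r M => by simp [Matrix.smul_mulVec] }

@[simp] lemma mvCLM_apply (v : Fin n → ℝ) (M : Matrix (Fin n) (Fin n) ℝ) :
    mvCLM v M = M *ᵥ v := rfl

lemma isUnit_det_of_decay (A : Matrix (Fin n) (Fin n) ℝ) (C c : ℝ) (hc : 0 < c)
    (hdecay : ∀ t : ℝ, 0 ≤ t → ‖exp (t • A)‖ ≤ C * Real.exp (-c * t)) :
    IsUnit A.det := by
  rw [isUnit_iff_ne_zero]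
  intro hdet
  obtain ⟨v, hv, hAv⟩ := (Matrix.exists_mulVec_eq_zero_iff).mpr hdet
  have hd : ∀ t : ℝ, HasDerivAt (fun u : ℝ => exp (u • A) *ᵥ v) 0 t := by
    intro t
    have h1 := hasDerivAt_exp_smul_const (𝕂 := ℝ) A t
    have h2 := ((mvCLM v).hasFDerivAt).comp_hasDerivAt t h1
    simp [← Matrix.mulVec_mulVec, hAv, Function.comp_def] at h2
    convert h2 using 1 <;> rfl
  have hconst : ∀ t : ℝ, exp (t • A) *ᵥ v = v := by
    intro t
    have := is_const_of_deriv_eq_zero (𝕜 := ℝ)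
      (f := fun u : ℝ => exp (u • A) *ᵥ v)
      (fun x => (hd x).differentiableAt) (fun x => (hd x).deriv) t 0
    simpa [exp_zero] using this
  have hvpos : 0 < ‖v‖ := norm_pos_iff.mpr hv
  have htend : Tendsto (fun t : ℝ => C * Real.exp (-c * t) * ‖v‖) atTop (𝓝 0) := by
    have h1 : Tendsto (fun t : ℝ => Real.exp (-c * t)) atTop (𝓝 0) := by
      refine Real.tendsto_exp_atBot.comp ?_
      exact tendsto_id.const_mul_atTop_of_neg (by linarith)
    have := (h1.const_mul C).mul_const ‖v‖
    simpa using this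
  have hev : ∀ᶠ t : ℝ in atTop, C * Real.exp (-c * t) * ‖v‖ < ‖v‖ :=
    htend.eventually_lt_const hvpos
  obtain ⟨t, hlt, ht0⟩ := (hev.and (eventually_ge_atTop (0:ℝ))).exists
  have hb : ‖v‖ ≤ C * Real.exp (-c * t) * ‖v‖ := by
    calc ‖v‖ = ‖exp (t • A) *ᵥ v‖ := by rw [hconst]
    _ ≤ ‖exp (t • A)‖ * ‖v‖ := Matrix.linfty_opNorm_mulVec _ _
    _ ≤ C * Real.exp (-c * t) * ‖v‖ := by
        exact mul_le_mul_of_nonneg_right (hdecay t ht0) (norm_nonneg v)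
  linarith

lemma exp_smul_sub (A : Matrix (Fin n) (Fin n) ℝ) (μ s : ℝ) :
    exp (s • (A - μ • (1 : Matrix (Fin n) (Fin n) ℝ))) =
      Real.exp (-(μ * s)) • exp (s • A) := by
  have hsplit : s • (A - μ • (1 : Matrix (Fin n) (Fin n) ℝ))
      = s • A + algebraMap ℝ (Matrix (Fin n) (Fin n) ℝ) (-(μ * s)) := by
    rw [Algebra.algebraMap_eq_smul_one, smul_sub]
    module
  rw [hsplit, Matrix.exp_add_of_commute _ _ ((Algebra.commutes (-(μ * s)) (s • A)).symm)]
  rw [show exp (algebraMap ℝ (Matrix (Fin n) (Fin n) ℝ) (-(μ * s)))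
      = algebraMap ℝ (Matrix (Fin n) (Fin n) ℝ) (exp (-(μ * s))) from (algebraMap_exp_comm _).symm]
  rw [Algebra.algebraMap_eq_smul_one, mul_smul_comm, mul_one,
    ← Real.exp_eq_exp_ℝ]

lemma tendsto_shift_pow_mul_exp (k : ℕ) (σ a : ℝ) (ha : 0 < a) :
    Tendsto (fun s : ℝ => (σ + s) ^ k * Real.exp (-a * s)) atTop (𝓝 0) := by
  have h1 := Real.tendsto_pow_mul_exp_neg_atTop_nhds_zero k
  have h2 : Tendsto (fun s : ℝ => a * (σ + s)) atTop atTop := by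
    apply Tendsto.const_mul_atTop ha
    exact tendsto_atTop_add_const_left _ σ tendsto_id
  have h3 := (h1.comp h2).mul_const (Real.exp (a * σ) / a ^ k)
  rw [zero_mul] at h3
  refine h3.congr fun s => ?_
  have hak : (a : ℝ) ^ k ≠ 0 := pow_ne_zero _ ha.ne'
  have he : Real.exp (-(a * (σ + s))) * Real.exp (a * σ) = Real.exp (-a * s) := by
    rw [← Real.exp_add]; congr 1; ring
  calc ((fun x => x ^ k * Real.exp (-x)) ∘ fun s => a * (σ + s)) s * (Real.exp (a * σ) / a ^ k)
      = (σ + s) ^ k * (Real.exp (-(a * (σ + s))) * Real.exp (a * σ)) * (a ^ k / a ^ k) := by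
        simp only [Function.comp_apply, mul_pow]; ring
    _ = (σ + s) ^ k * Real.exp (-a * s) := by rw [he, div_self hak, mul_one]

lemma key_hasDerivAt (A : Matrix (Fin n) (Fin n) ℝ) (hA : A * A⁻¹ = 1)
    (β : Fin n → ℝ) (E : Matrix (Fin n) (Fin n) ℝ) (σ : ℝ) (t : ℝ) :
    HasDerivAt
      (fun s : ℝ => L β (E * exp (s • A) *
        (((σ + s) ^ 2 / 2) • (1 : Matrix (Fin n) (Fin n) ℝ) - (σ + s) • A⁻¹ + A⁻¹ * A⁻¹)))
      (((σ + t) ^ 2 / 2) * L β (E * exp (t • A) * A)) t := by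
  have hexp : HasDerivAt (fun s : ℝ => E * exp (s • A)) (E * (exp (t • A) * A)) t :=
    (hasDerivAt_exp_smul_const (𝕂 := ℝ) A t).const_mul E
  have h2 : HasDerivAt (fun s : ℝ => σ + s) 1 t := (hasDerivAt_id t).const_add σ
  have h1 : HasDerivAt (fun s : ℝ => (σ + s) ^ 2 / 2) (σ + t) t := by
    have := (h2.pow 2).div_const 2
    simpa using this
  have hpoly : HasDerivAt
      (fun s : ℝ => ((σ + s) ^ 2 / 2) • (1 : Matrix (Fin n) (Fin n) ℝ)
        - (σ + s) • A⁻¹ + A⁻¹ * A⁻¹)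
      ((σ + t) • (1 : Matrix (Fin n) (Fin n) ℝ) - (1 : ℝ) • A⁻¹) t := by
    exact ((h1.smul_const (1 : Matrix (Fin n) (Fin n) ℝ)).sub
      (h2.smul_const A⁻¹)).add_const (A⁻¹ * A⁻¹)
  have hmul := hexp.mul hpoly
  have hL := (L β).hasFDerivAt.comp_hasDerivAt t hmul
  have hA2 : A * (A⁻¹ * A⁻¹) = A⁻¹ := by rw [← Matrix.mul_assoc, hA, Matrix.one_mul]
  have h3 : A * (((σ + t) ^ 2 / 2) • (1 : Matrix (Fin n) (Fin n) ℝ)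
      - (σ + t) • A⁻¹ + A⁻¹ * A⁻¹)
      + ((σ + t) • (1 : Matrix (Fin n) (Fin n) ℝ) - (1 : ℝ) • A⁻¹)
      = ((σ + t) ^ 2 / 2) • A := by
    rw [Matrix.mul_add, Matrix.mul_sub, mul_smul_comm, mul_smul_comm, Matrix.mul_one, hA, hA2,
      one_smul]
    abel
  have hval : E * (exp (t • A) * A) * (((σ + t) ^ 2 / 2) • (1 : Matrix (Fin n) (Fin n) ℝ)
        - (σ + t) • A⁻¹ + A⁻¹ * A⁻¹)
      + E * exp (t • A) * ((σ + t) • (1 : Matrix (Fin n) (Fin n) ℝ) - (1 : ℝ) • A⁻¹)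
      = ((σ + t) ^ 2 / 2) • (E * exp (t • A) * A) := by
    rw [← Matrix.mul_assoc E (exp (t • A)) A, Matrix.mul_assoc (E * exp (t • A)) A,
      ← Matrix.mul_add (E * exp (t • A)), h3, mul_smul_comm]
  rw [hval, _root_.map_smul, smul_eq_mul] at hL
  exact hL

end CsmdpAux

open CsmdpAux NormedSpace Filter Set Topology in
/-- Let `A₁` satisfy `‖exp (t • A₁)‖ ≤ C ⬝ exp (-c t)` for all `t ≥ 0`
(`C ≥ 0`, `c > 0`), let `μ > 0`, set `A₂ = A₁ - μI`, let `β` be a row vector and `τ ≥ 0`.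
Then
`∫₀^τ (t²/2) (-β exp (t A₁) A₁ 𝟙) dt + ∫₀^∞ ((τ+s)²/2) (-β exp (τ A₁) exp (s A₂) A₂ 𝟙) ds
  = τ β exp (τ A₁) (A₁⁻¹ - A₂⁻¹) 𝟙 + β A₁⁻² 𝟙 + β exp (τ A₁) (A₂⁻² - A₁⁻²) 𝟙`,
the closed form of the expected age cost `a_j(τ)`. -/
theorem csmdp_expected_age_cost {n : ℕ} (A₁ : Matrix (Fin n) (Fin n) ℝ)
    (C c : ℝ) (hC : 0 ≤ C) (hc : 0 < c)
    (hdecay : ∀ t : ℝ, 0 ≤ t → ‖NormedSpace.exp (t • A₁)‖ ≤ C * Real.exp (-c * t))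
    (μ : ℝ) (hμ : 0 < μ)
    (A₂ : Matrix (Fin n) (Fin n) ℝ)
    (hA₂ : A₂ = A₁ - μ • (1 : Matrix (Fin n) (Fin n) ℝ))
    (β : Fin n → ℝ) (τ : ℝ) (hτ : 0 ≤ τ) :
    (∫ t in (0:ℝ)..τ,
        (t ^ 2 / 2) * (-(β ⬝ᵥ (NormedSpace.exp (t • A₁) *ᵥ (A₁ *ᵥ (1 : Fin n → ℝ))))))
      + (∫ s in Set.Ioi (0:ℝ),
          ((τ + s) ^ 2 / 2) * (-(β ⬝ᵥ ((NormedSpace.exp (τ • A₁) * NormedSpace.exp (s • A₂))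
              *ᵥ (A₂ *ᵥ (1 : Fin n → ℝ))))))
      = τ * (β ⬝ᵥ ((NormedSpace.exp (τ • A₁) * (A₁⁻¹ - A₂⁻¹)) *ᵥ (1 : Fin n → ℝ)))
        + β ⬝ᵥ ((A₁⁻¹ * A₁⁻¹) *ᵥ (1 : Fin n → ℝ))
        + β ⬝ᵥ ((NormedSpace.exp (τ • A₁) * (A₂⁻¹ * A₂⁻¹ - A₁⁻¹ * A₁⁻¹))
            *ᵥ (1 : Fin n → ℝ)) := by
  classical
  have hcμ : (0:ℝ) < c + μ := by linarith
  have hdet1 : IsUnit A₁.det := CsmdpAux.isUnit_det_of_decay A₁ C c hc hdecay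
  have hdecay2 : ∀ s : ℝ, 0 ≤ s → ‖exp (s • A₂)‖ ≤ C * Real.exp (-(c + μ) * s) := by
    intro s hs
    have hsplit : Real.exp (-(μ * s)) * Real.exp (-c * s) = Real.exp (-(c + μ) * s) := by
      rw [← Real.exp_add]; congr 1; ring
    rw [hA₂, CsmdpAux.exp_smul_sub, norm_smul, Real.norm_eq_abs,
      abs_of_pos (Real.exp_pos _)]
    calc Real.exp (-(μ * s)) * ‖exp (s • A₁)‖
        ≤ Real.exp (-(μ * s)) * (C * Real.exp (-c * s)) :=
          mul_le_mul_of_nonneg_left (hdecay s hs) (Real.exp_pos _).le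
      _ = C * (Real.exp (-(μ * s)) * Real.exp (-c * s)) := by ring
      _ = C * Real.exp (-(c + μ) * s) := by rw [hsplit]
  have hdet2 : IsUnit A₂.det := CsmdpAux.isUnit_det_of_decay A₂ C (c + μ) hcμ hdecay2
  have hinv1 : A₁ * A₁⁻¹ = 1 := Matrix.mul_nonsing_inv _ hdet1
  have hinv2 : A₂ * A₂⁻¹ = 1 := Matrix.mul_nonsing_inv _ hdet2
  have hexpc1 : Continuous fun t : ℝ => exp (t • A₁) :=
    exp_continuous.comp (continuous_id.smul continuous_const)
  have hexpc2 : Continuous fun s : ℝ => exp (s • A₂) :=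
    exp_continuous.comp (continuous_id.smul continuous_const)
  simp only [Matrix.mulVec_mulVec, ← CsmdpAux.L_apply, mul_neg]
  set E := exp (τ • A₁) with hE
  -- the first integral
  have key1 : ∀ t : ℝ, HasDerivAt
      (fun s : ℝ => -(L β (exp (s • A₁) *
        ((s ^ 2 / 2) • (1 : Matrix (Fin n) (Fin n) ℝ) - s • A₁⁻¹ + A₁⁻¹ * A₁⁻¹))))
      (-(t ^ 2 / 2 * L β (exp (t • A₁) * A₁))) t := by
    intro t
    have := (CsmdpAux.key_hasDerivAt A₁ hinv1 β 1 0 t).neg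
    simpa only [Matrix.one_mul, zero_add, Pi.neg_def] using this
  have hI1 : (∫ t in (0:ℝ)..τ, -(t ^ 2 / 2 * L β (exp (t • A₁) * A₁)))
      = -(L β (E * ((τ ^ 2 / 2) • (1 : Matrix (Fin n) (Fin n) ℝ) - τ • A₁⁻¹ + A₁⁻¹ * A₁⁻¹)))
        - -(L β (A₁⁻¹ * A₁⁻¹)) := by
    have hint : IntervalIntegrable
        (fun t : ℝ => -(t ^ 2 / 2 * L β (exp (t • A₁) * A₁))) volume 0 τ := by
      apply Continuous.intervalIntegrable
      exact (((continuous_pow 2).div_const 2).mul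
        ((L β).continuous.comp (hexpc1.mul continuous_const))).neg
    have := intervalIntegral.integral_eq_sub_of_hasDerivAt (fun t _ => key1 t) hint
    rw [this, hE]
    congr 2
    norm_num [NormedSpace.exp_zero]
  -- the second integral
  have key2 : ∀ s : ℝ, HasDerivAt
      (fun u : ℝ => -(L β (E * exp (u • A₂) *
        (((τ + u) ^ 2 / 2) • (1 : Matrix (Fin n) (Fin n) ℝ) - (τ + u) • A₂⁻¹ + A₂⁻¹ * A₂⁻¹))))
      (-((τ + s) ^ 2 / 2 * L β (E * exp (s • A₂) * A₂))) s :=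
    fun s => (CsmdpAux.key_hasDerivAt A₂ hinv2 β E τ s).neg
  have hint2 : IntegrableOn
      (fun s : ℝ => -((τ + s) ^ 2 / 2 * L β (E * exp (s • A₂) * A₂))) (Set.Ioi 0) := by
    have hcont2 : Continuous fun s : ℝ => -((τ + s) ^ 2 / 2 * L β (E * exp (s • A₂) * A₂)) :=
      ((((continuous_const.add continuous_id).pow 2).div_const 2).mul
        ((L β).continuous.comp ((continuous_const.mul hexpc2).mul continuous_const))).neg
    apply integrable_of_isBigO_exp_neg hc hcont2.continuousOn
    have htd : Tendsto (fun s : ℝ =>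
        (‖L β‖ * ‖E‖ * ‖A₂‖ * C / 2) * ((τ + s) ^ 2 * Real.exp (-μ * s))) atTop (𝓝 0) := by
      simpa using ((CsmdpAux.tendsto_shift_pow_mul_exp 2 τ μ hμ).const_mul
        (‖L β‖ * ‖E‖ * ‖A₂‖ * C / 2))
    rw [Asymptotics.isBigO_iff]
    refine ⟨1, ?_⟩
    filter_upwards [htd.eventually_le_const one_pos, eventually_ge_atTop (0:ℝ)] with s h1 hs
    have hsplit : Real.exp (-(c + μ) * s) = Real.exp (-μ * s) * Real.exp (-c * s) := by
      rw [← Real.exp_add]; congr 1; ring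
    have hM : ‖E * exp (s • A₂) * A₂‖ ≤ ‖E‖ * (C * Real.exp (-(c + μ) * s)) * ‖A₂‖ := by
      calc ‖E * exp (s • A₂) * A₂‖ ≤ ‖E * exp (s • A₂)‖ * ‖A₂‖ := norm_mul_le _ _
        _ ≤ ‖E‖ * ‖exp (s • A₂)‖ * ‖A₂‖ :=
            mul_le_mul_of_nonneg_right (norm_mul_le _ _) (norm_nonneg _)
        _ ≤ ‖E‖ * (C * Real.exp (-(c + μ) * s)) * ‖A₂‖ := by
            have := hdecay2 s hs
            gcongr
    calc ‖-((τ + s) ^ 2 / 2 * L β (E * exp (s • A₂) * A₂))‖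
        = (τ + s) ^ 2 / 2 * ‖L β (E * exp (s • A₂) * A₂)‖ := by
          rw [norm_neg, norm_mul, Real.norm_of_nonneg (by positivity : (0:ℝ) ≤ (τ + s) ^ 2 / 2)]
      _ ≤ (τ + s) ^ 2 / 2 * (‖L β‖ * (‖E‖ * (C * Real.exp (-(c + μ) * s)) * ‖A₂‖)) := by
          have h2 := (L β).le_opNorm (E * exp (s • A₂) * A₂)
          have h3 : ‖L β (E * exp (s • A₂) * A₂)‖
              ≤ ‖L β‖ * (‖E‖ * (C * Real.exp (-(c + μ) * s)) * ‖A₂‖) :=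
            h2.trans (mul_le_mul_of_nonneg_left hM (norm_nonneg _))
          exact mul_le_mul_of_nonneg_left h3 (by positivity)
      _ = ((‖L β‖ * ‖E‖ * ‖A₂‖ * C / 2) * ((τ + s) ^ 2 * Real.exp (-μ * s)))
            * Real.exp (-c * s) := by rw [hsplit]; ring
      _ ≤ 1 * Real.exp (-c * s) :=
          mul_le_mul_of_nonneg_right h1 (Real.exp_pos _).le
      _ = 1 * ‖Real.exp (-c * s)‖ := by
          rw [Real.norm_of_nonneg (Real.exp_pos _).le]
  have htends : Tendsto (fun s : ℝ => -(L β (E * exp (s • A₂) *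
      (((τ + s) ^ 2 / 2) • (1 : Matrix (Fin n) (Fin n) ℝ) - (τ + s) • A₂⁻¹ + A₂⁻¹ * A₂⁻¹))))
      atTop (𝓝 0) := by
    set c2 : ℝ := ‖L β‖ * ‖E‖ * C * (‖(1 : Matrix (Fin n) (Fin n) ℝ)‖ / 2) with hc2
    set c1 : ℝ := ‖L β‖ * ‖E‖ * C * ‖A₂⁻¹‖ with hc1
    set c0 : ℝ := ‖L β‖ * ‖E‖ * C * ‖A₂⁻¹ * A₂⁻¹‖ with hc0
    have hB : Tendsto (fun s : ℝ =>
        c2 * ((τ + s) ^ 2 * Real.exp (-(c + μ) * s))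
        + c1 * ((τ + s) ^ 1 * Real.exp (-(c + μ) * s))
        + c0 * ((τ + s) ^ 0 * Real.exp (-(c + μ) * s))) atTop (𝓝 0) := by
      have h2 := (CsmdpAux.tendsto_shift_pow_mul_exp 2 τ (c + μ) hcμ).const_mul c2
      have h1 := (CsmdpAux.tendsto_shift_pow_mul_exp 1 τ (c + μ) hcμ).const_mul c1
      have h0 := (CsmdpAux.tendsto_shift_pow_mul_exp 0 τ (c + μ) hcμ).const_mul c0
      simpa using (h2.add h1).add h0
    apply squeeze_zero_norm' _ hB
    filter_upwards [eventually_ge_atTop (0:ℝ)] with s hs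
    have hτs : (0:ℝ) ≤ τ + s := by linarith
    have hQ : ‖((τ + s) ^ 2 / 2) • (1 : Matrix (Fin n) (Fin n) ℝ) - (τ + s) • A₂⁻¹
        + A₂⁻¹ * A₂⁻¹‖ ≤ (τ + s) ^ 2 / 2 * ‖(1 : Matrix (Fin n) (Fin n) ℝ)‖
          + (τ + s) * ‖A₂⁻¹‖ + ‖A₂⁻¹ * A₂⁻¹‖ := by
      refine (norm_add_le _ _).trans ?_
      have := (norm_sub_le (((τ + s) ^ 2 / 2) • (1 : Matrix (Fin n) (Fin n) ℝ)) ((τ + s) • A₂⁻¹))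
      rw [norm_smul, norm_smul, Real.norm_of_nonneg (by positivity : (0:ℝ) ≤ (τ + s) ^ 2 / 2),
        Real.norm_of_nonneg hτs] at this
      linarith
    calc ‖-(L β (E * exp (s • A₂) *
          (((τ + s) ^ 2 / 2) • (1 : Matrix (Fin n) (Fin n) ℝ) - (τ + s) • A₂⁻¹ + A₂⁻¹ * A₂⁻¹)))‖
        ≤ ‖L β‖ * (‖E‖ * ‖exp (s • A₂)‖ * ‖((τ + s) ^ 2 / 2) • (1 : Matrix (Fin n) (Fin n) ℝ)
            - (τ + s) • A₂⁻¹ + A₂⁻¹ * A₂⁻¹‖) := by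
          rw [norm_neg]
          refine ((L β).le_opNorm _).trans ?_
          refine mul_le_mul_of_nonneg_left ?_ (norm_nonneg _)
          exact (norm_mul_le _ _).trans
            (mul_le_mul_of_nonneg_right (norm_mul_le _ _) (norm_nonneg _))
      _ ≤ ‖L β‖ * (‖E‖ * (C * Real.exp (-(c + μ) * s)) * ((τ + s) ^ 2 / 2
            * ‖(1 : Matrix (Fin n) (Fin n) ℝ)‖ + (τ + s) * ‖A₂⁻¹‖ + ‖A₂⁻¹ * A₂⁻¹‖)) := by
          have hd := hdecay2 s hs
          gcongr
      _ = c2 * ((τ + s) ^ 2 * Real.exp (-(c + μ) * s))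
          + c1 * ((τ + s) ^ 1 * Real.exp (-(c + μ) * s))
          + c0 * ((τ + s) ^ 0 * Real.exp (-(c + μ) * s)) := by
          rw [hc2, hc1, hc0]; ring
  have hI2 : (∫ s in Set.Ioi (0:ℝ), -((τ + s) ^ 2 / 2 * L β (E * exp (s • A₂) * A₂)))
      = 0 - -(L β (E * ((τ ^ 2 / 2) • (1 : Matrix (Fin n) (Fin n) ℝ) - τ • A₂⁻¹
          + A₂⁻¹ * A₂⁻¹))) := by
    have := MeasureTheory.integral_Ioi_of_hasDerivAt_of_tendsto' (fun x _ => key2 x) hint2 htends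
    rw [this]
    congr 2
    norm_num [NormedSpace.exp_zero]
  rw [hI1, hI2]
  have hmat : E * ((τ ^ 2 / 2) • (1 : Matrix (Fin n) (Fin n) ℝ) - τ • A₂⁻¹ + A₂⁻¹ * A₂⁻¹)
      - E * ((τ ^ 2 / 2) • (1 : Matrix (Fin n) (Fin n) ℝ) - τ • A₁⁻¹ + A₁⁻¹ * A₁⁻¹)
      = τ • (E * (A₁⁻¹ - A₂⁻¹)) + E * (A₂⁻¹ * A₂⁻¹ - A₁⁻¹ * A₁⁻¹) := by
    simp only [Matrix.mul_add, Matrix.mul_sub, mul_smul_comm, Matrix.mul_one, smul_sub]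
    abel
  have hfin := congrArg (L β) hmat
  rw [map_sub, map_add, _root_.map_smul, smul_eq_mul] at hfin
  linarith
end
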